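/- Let a¹,…,a^{N_r} be pairwise distinct points in ℝ^ν, s > 0, and define h^c : ℝ^ν → ℝ^{N_r} by h^c_r(η) = exp(−‖η − a^r‖²/(ν s²)). Let H be any ℝ^ν-valued random variable whose probability measure P_H has full support ℝ^ν (e.g., has a density positive on ℝ^ν). Then the matrix E[h^c(H) ⊗ h^c(H)] is positive definite in 𝕄_{N_r}. -/

import Mathlib

open MeasureTheory Filter Set Topology

private lemma aux_countable_zero {ψ : ℝ → ℝ} (hψ : ∀ x : ℝ, AnalyticAt ℝ ψ x)
    {t₀ : ℝ} (h0 : ψ t₀ ≠ 0) : {t : ℝ | ψ t = 0}.Countable := by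
  set Z := {t : ℝ | ψ t = 0} with hZ
  have hdisc : ∀ x ∈ Z, 𝓝[≠] x ⊓ 𝓟 Z = ⊥ := by
    intro x _
    rcases (hψ x).eventually_eq_zero_or_eventually_ne_zero with hcase | hcase
    · exfalso
      have heq : EqOn ψ 0 univ :=
        AnalyticOnNhd.eqOn_zero_of_preconnected_of_eventuallyEq_zero
          (fun z _ => hψ z) isPreconnected_univ (mem_univ x) hcase
      exact h0 (heq (mem_univ t₀))
    · rw [inf_principal_eq_bot]
      filter_upwards [hcase] with z hz
      simpa [hZ] using hz
  have hdt : DiscreteTopology Z := discreteTopology_subtype_iff.mpr hdisc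
  have hcnt : Countable Z := by
    rw [← TopologicalSpace.separableSpace_iff_countable]
    infer_instance
  exact Set.countable_coe_iff.mp hcnt

private lemma aux_exp_sum_ne {m : ℕ} (κ δ : Fin m → ℝ) (hδ : Function.Injective δ)
    {r₀ : Fin m} (hκ : κ r₀ ≠ 0) : ∃ T : ℝ, ∑ r, κ r * Real.exp (δ r * T) ≠ 0 := by
  classical
  set S : Finset (Fin m) := Finset.univ.filter fun r => κ r ≠ 0 with hS
  have hr₀S : r₀ ∈ S := by simp [hS, hκ]
  obtain ⟨r₁, hr₁S, hmax⟩ := S.exists_max_image δ ⟨r₀, hr₀S⟩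
  have hκ₁ : κ r₁ ≠ 0 := by simpa [hS] using hr₁S
  have key : Tendsto (fun T => ∑ r ∈ S, κ r * Real.exp ((δ r - δ r₁) * T)) atTop
      (𝓝 (κ r₁)) := by
    have h1 : Tendsto (fun T => ∑ r ∈ S, κ r * Real.exp ((δ r - δ r₁) * T)) atTop
        (𝓝 (∑ r ∈ S, if r = r₁ then κ r else 0)) := by
      apply tendsto_finset_sum
      intro r hrS
      by_cases hr : r = r₁
      · subst hr; simpa using tendsto_const_nhds
      · simp only [hr, if_false]
        rw [show (0:ℝ) = κ r * 0 by ring]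
        apply Tendsto.const_mul
        apply Real.tendsto_exp_atBot.comp
        have hlt : δ r - δ r₁ < 0 :=
          sub_neg.mpr (lt_of_le_of_ne (hmax r hrS) fun hc => hr (hδ hc))
        exact (tendsto_const_mul_atBot_of_neg hlt).mpr tendsto_id
    simpa [Finset.sum_ite_eq' S r₁, hr₁S] using h1
  obtain ⟨T, hT⟩ := (key.eventually_ne hκ₁).exists
  refine ⟨T, fun hc => hT ?_⟩
  have hext : ∑ r ∈ S, κ r * Real.exp ((δ r - δ r₁) * T)
      = ∑ r, κ r * Real.exp ((δ r - δ r₁) * T) := by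
    apply Finset.sum_filter_of_ne
    intro r _ hne
    intro hzero
    apply hne
    rw [hzero, zero_mul]
  have hfac : ∀ r : Fin m, κ r * Real.exp ((δ r - δ r₁) * T)
      = Real.exp (-(δ r₁ * T)) * (κ r * Real.exp (δ r * T)) := by
    intro r
    rw [show (δ r - δ r₁) * T = δ r * T + -(δ r₁ * T) by ring, Real.exp_add]
    ring
  rw [hext]
  simp only [hfac]
  rw [← Finset.mul_sum, hc, mul_zero]

private lemma aux_slice_countable {m : ℕ} (c : ℝ) (hc : 0 < c) (w α γ : Fin m → ℝ)
    (hα : Function.Injective α) {r₀ : Fin m} (hw : w r₀ ≠ 0) :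
    {t : ℝ | ∑ r, w r * Real.exp (-(t ^ 2 + 2 * t * α r + γ r) / c) = 0}.Countable := by
  set κ : Fin m → ℝ := fun r => w r * Real.exp (-γ r / c) with hκdef
  set δ : Fin m → ℝ := fun r => -2 * α r / c with hδdef
  set g : ℝ → ℝ := fun t => ∑ r, κ r * Real.exp (δ r * t) with hgdef
  have hfac : ∀ t : ℝ, ∑ r, w r * Real.exp (-(t ^ 2 + 2 * t * α r + γ r) / c)
      = Real.exp (-(t ^ 2) / c) * g t := by
    intro t
    rw [hgdef, Finset.mul_sum]
    apply Finset.sum_congr rfl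
    intro r _
    rw [hκdef]
    have hexp : -(t ^ 2 + 2 * t * α r + γ r) / c
        = -(t ^ 2) / c + (-γ r / c + (-2 * α r / c) * t) := by
      field_simp
      ring
    rw [hexp, Real.exp_add, Real.exp_add, hδdef]
    ring
  have hset : {t : ℝ | ∑ r, w r * Real.exp (-(t ^ 2 + 2 * t * α r + γ r) / c) = 0}
      = {t : ℝ | g t = 0} := by
    ext t
    simp only [mem_setOf_eq, hfac t, mul_eq_zero]
    have := Real.exp_ne_zero (-(t ^ 2) / c)
    tauto
  rw [hset]
  have hδinj : Function.Injective δ := by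
    intro x y hxy
    apply hα
    have hxy' : -2 * α x / c = -2 * α y / c := hxy
    rw [div_eq_div_iff hc.ne' hc.ne'] at hxy'
    have h2 := mul_right_cancel₀ hc.ne' hxy'
    linarith
  have hκ₀ : κ r₀ ≠ 0 := mul_ne_zero hw (Real.exp_ne_zero _)
  have hananlytic : ∀ x : ℝ, AnalyticAt ℝ g x := by
    intro x
    rw [hgdef]
    apply Finset.analyticAt_fun_sum
    intro r _
    apply AnalyticAt.mul analyticAt_const
    have : (fun t : ℝ => Real.exp (δ r * t)) = Real.exp ∘ fun t : ℝ => δ r * t := rfl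
    rw [this]
    exact analyticAt_rexp.comp (analyticAt_const.mul analyticAt_id)
  obtain ⟨T, hT⟩ := aux_exp_sum_ne κ δ hδinj hκ₀
  exact aux_countable_zero hananlytic (t₀ := T) hT

section
local notation "⟪" x ", " y "⟫" => @inner ℝ _ _ x y

private lemma aux_volume_zero {n : ℕ} {Nr : ℕ} (c : ℝ) (hc : 0 < c)
    (a : Fin Nr → EuclideanSpace ℝ (Fin (n + 1))) (ha : Function.Injective a)
    (w : Fin Nr → ℝ) {r₀ : Fin Nr} (hw : w r₀ ≠ 0) :
    volume {η : EuclideanSpace ℝ (Fin (n + 1)) |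
      ∑ r, w r * Real.exp (-‖η - a r‖ ^ 2 / c) = 0} = 0 := by
  classical
  set f : EuclideanSpace ℝ (Fin (n + 1)) → ℝ := fun η => ∑ r, w r * Real.exp (-‖η - a r‖ ^ 2 / c) with hfdef
  set Z : Set (EuclideanSpace ℝ (Fin (n + 1))) := {η | f η = 0} with hZdef
  have hcontf : Continuous f := by
    apply continuous_finset_sum
    intro r _
    exact continuous_const.mul (Real.continuous_exp.comp
      ((((continuous_id.sub continuous_const).norm.pow 2).neg).div_const c))
  have hZm : MeasurableSet Z := (isClosed_eq hcontf continuous_const).measurableSet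
  -- nontrivial E
  have hnt : Nontrivial (EuclideanSpace ℝ (Fin (n + 1))) := by
    refine ⟨EuclideanSpace.single (0 : Fin (n + 1)) (1 : ℝ), 0, fun hcon => ?_⟩
    have h1 : EuclideanSpace.single (0 : Fin (n + 1)) (1 : ℝ) 0 = 1 := by
      simp [EuclideanSpace.single_apply]
    rw [hcon] at h1
    simp [PiLp.zero_apply] at h1
  -- find separating vector
  set Bad : Set (EuclideanSpace ℝ (Fin (n + 1))) := {(0 : EuclideanSpace ℝ (Fin (n + 1)))} ∪
      ⋃ (q : Fin Nr × Fin Nr) (_ : q.1 ≠ q.2), {x : EuclideanSpace ℝ (Fin (n + 1)) | ⟪a q.1 - a q.2, x⟫ = 0} with hBaddef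
  have hBadvol : volume Bad = 0 := by
    apply measure_union_null
    · have hbot := Measure.addHaar_submodule
        (volume : Measure (EuclideanSpace ℝ (Fin (n + 1)))) ⊥ bot_ne_top
      simpa using hbot
    · apply measure_iUnion_null
      intro q
      apply measure_iUnion_null
      intro hq
      have hu : a q.1 - a q.2 ≠ 0 := sub_ne_zero.mpr fun hc' => hq (ha hc')
      have hker : {x : EuclideanSpace ℝ (Fin (n + 1)) | ⟪a q.1 - a q.2, x⟫ = 0}
          = (LinearMap.ker (innerSL ℝ (a q.1 - a q.2)).toLinearMap :
            Set (EuclideanSpace ℝ (Fin (n + 1)))) := by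
        ext x; simp [LinearMap.mem_ker, inner_sub_left]
      rw [hker]
      apply Measure.addHaar_submodule
      intro htop
      apply hu
      have hmem : a q.1 - a q.2 ∈ LinearMap.ker (innerSL ℝ (a q.1 - a q.2)).toLinearMap := by
        rw [htop]; trivial
      have : ⟪a q.1 - a q.2, a q.1 - a q.2⟫ = (0 : ℝ) := hmem
      exact inner_self_eq_zero.mp this
  obtain ⟨v, hv⟩ : ∃ v : EuclideanSpace ℝ (Fin (n + 1)), v ∉ Bad := by
    by_contra hcon
    push_neg at hcon
    have huniv : volume (univ : Set (EuclideanSpace ℝ (Fin (n + 1)))) = 0 :=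
      measure_mono_null (fun x _ => hcon x) hBadvol
    have hpos : 0 < volume (univ : Set (EuclideanSpace ℝ (Fin (n + 1)))) :=
      IsOpen.measure_pos volume isOpen_univ univ_nonempty
    rw [huniv] at hpos
    exact lt_irrefl _ hpos
  have hv0 : v ≠ 0 := fun hc' => hv (Or.inl (by simp [hc']))
  have hsep : ∀ r r' : Fin Nr, r ≠ r' → ⟪a r - a r', v⟫ ≠ (0 : ℝ) := by
    intro r r' hne hc'
    exact hv (Or.inr (mem_iUnion.mpr ⟨(r, r'), mem_iUnion.mpr ⟨hne, hc'⟩⟩))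
  set v' : EuclideanSpace ℝ (Fin (n + 1)) := ‖v‖⁻¹ • v with hv'def
  have hv'norm : ‖v'‖ = 1 := norm_smul_inv_norm hv0
  have hsep' : ∀ r r' : Fin Nr, r ≠ r' → ⟪v', a r⟫ ≠ (⟪v', a r'⟫ : ℝ) := by
    intro r r' hne hc'
    apply hsep r r' hne
    have h1 : ⟪v', a r - a r'⟫ = (0 : ℝ) := by
      rw [inner_sub_right]
      rw [hc']
      ring
    rw [hv'def, real_inner_smul_left] at h1
    rcases mul_eq_zero.mp h1 with h2 | h2
    · exact absurd (inv_eq_zero.mp h2) (norm_ne_zero_iff.mpr hv0)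
    · rw [real_inner_comm] at h2; exact h2
  -- orthonormal basis with b 0 = v'
  have hON : Orthonormal ℝ (({(0 : Fin (n + 1))} : Set (Fin (n + 1))).restrict
      (fun _ : Fin (n + 1) => v')) := by
    constructor
    · intro i; exact hv'norm
    · intro i j hij
      exfalso
      apply hij
      apply Subtype.ext
      have hi := i.2
      have hj := j.2
      simp only [Set.mem_singleton_iff] at hi hj
      rw [hi, hj]
  obtain ⟨b, hb⟩ := hON.exists_orthonormalBasis_extension_of_card_eq
    (by simp [finrank_euclideanSpace_fin])
  have hbv : b 0 = v' := hb 0 rfl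
  -- the measure-preserving parametrization
  set e2 := MeasurableEquiv.piFinSuccAbove (fun _ : Fin (n + 1) => ℝ) 0 with he2def
  set Θ : ℝ × (Fin n → ℝ) → EuclideanSpace ℝ (Fin (n + 1)) := fun q =>
    b.repr.symm ((MeasurableEquiv.toLp 2 (Fin (n + 1) → ℝ)) (e2.symm q)) with hΘdef
  have hmp : MeasurePreserving Θ (volume.prod volume) volume := by
    have h1 := b.measurePreserving_repr_symm
    have h2 := PiLp.volume_preserving_toLp (Fin (n + 1))
    have h3 := (volume_preserving_piFinSuccAbove (fun _ : Fin (n + 1) => ℝ) 0).symm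
    have h := h1.comp (h2.comp h3)
    convert h using 1
    exacts [rfl, rfl]
  have hΘdecomp : ∀ (t : ℝ) (y : Fin n → ℝ), Θ (t, y) = t • v' + Θ (0, y) := by
    intro t y
    have hsymm : ∀ t' : ℝ, e2.symm (t', y) = Fin.insertNth 0 t' y := fun _ => rfl
    have hX : (MeasurableEquiv.toLp 2 (Fin (n + 1) → ℝ)) (Fin.insertNth 0 t y)
        = (MeasurableEquiv.toLp 2 (Fin (n + 1) → ℝ)) (Fin.insertNth 0 (0:ℝ) y)
          + EuclideanSpace.single 0 t := by
      apply PiLp.ext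
      intro k
      induction k using Fin.cases with
      | zero =>
        simp [MeasurableEquiv.coe_toLp, PiLp.toLp_apply,
          EuclideanSpace.single_apply, PiLp.add_apply, Fin.insertNth_apply_same]
      | succ j =>
        have hsa : Fin.succ j = (0 : Fin (n + 1)).succAbove j := by
          simp [Fin.succAbove_zero]
        simp only [MeasurableEquiv.coe_toLp, PiLp.toLp_apply,
          PiLp.add_apply, EuclideanSpace.single_apply, hsa, Fin.insertNth_apply_succAbove]
        simp [Fin.succAbove_ne, Fin.succ_ne_zero]
    rw [hΘdef]
    simp only [hsymm]
    have hsingle : (EuclideanSpace.single (0 : Fin (n + 1)) t)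
        = t • EuclideanSpace.single (0 : Fin (n + 1)) (1 : ℝ) := by
      apply PiLp.ext
      intro k
      by_cases hk : k = 0 <;>
        simp [EuclideanSpace.single_apply, PiLp.smul_apply, hk]
    rw [hX, map_add, hsingle, _root_.map_smul, OrthonormalBasis.repr_symm_single, hbv]
    exact add_comm _ _
  -- reduce to slices
  have hZpre : volume Z = (volume.prod volume) (Θ ⁻¹' Z) := (hmp.measure_preimage
    hZm.nullMeasurableSet).symm
  rw [hZpre]
  set W' : Set ((Fin n → ℝ) × ℝ) := {q | f (Θ (q.2, q.1)) = 0} with hW'def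
  have hW'm : MeasurableSet W' := by
    have hΘm : Measurable Θ := hmp.measurable
    have : W' = (fun q : (Fin n → ℝ) × ℝ => Θ (q.2, q.1)) ⁻¹' Z := rfl
    rw [this]
    exact (hΘm.comp (measurable_snd.prodMk measurable_fst)) hZm
  have hswap : Θ ⁻¹' Z = Prod.swap ⁻¹' W' := rfl
  rw [hswap]
  have hsw := (Measure.measurePreserving_swap
      (μ := (volume : Measure ℝ)) (ν := (volume : Measure (Fin n → ℝ)))).measure_preimage
      hW'm.nullMeasurableSet
  rw [hsw]
  rw [MeasureTheory.Measure.measure_prod_null hW'm]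
  apply Eventually.of_forall
  intro y
  -- the slice in t is countable
  show volume (Prod.mk y ⁻¹' W') = (0 : (Fin n → ℝ) → ENNReal) y
  have hsl : Prod.mk y ⁻¹' W' = {t : ℝ | f (Θ (t, y)) = 0} := rfl
  rw [hsl, Pi.zero_apply]
  set u : EuclideanSpace ℝ (Fin (n + 1)) := Θ (0, y) with hudef
  set α : Fin Nr → ℝ := fun r => ⟪v', u - a r⟫ with hαdef
  set γ : Fin Nr → ℝ := fun r => ‖u - a r‖ ^ 2 with hγdef
  have hslset : {t : ℝ | f (Θ (t, y)) = 0}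
      = {t : ℝ | ∑ r, w r * Real.exp (-(t ^ 2 + 2 * t * α r + γ r) / c) = 0} := by
    ext t
    simp only [mem_setOf_eq]
    have hnorm : ∀ r, ‖Θ (t, y) - a r‖ ^ 2 = t ^ 2 + 2 * t * α r + γ r := by
      intro r
      rw [hΘdecomp t y, ← hudef, add_sub_assoc, norm_add_sq_real, real_inner_smul_left,
        norm_smul, hv'norm]
      simp [hαdef, hγdef, abs_mul_abs_self]
      ring
    rw [hfdef]
    simp only [hnorm]
  rw [hslset]
  have hαinj : Function.Injective α := by
    intro r r' hrr'
    by_contra hne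
    apply hsep' r r' hne
    rw [hαdef] at hrr'
    simp only [inner_sub_right] at hrr'
    linarith
  exact Set.Countable.measure_zero
    (aux_slice_countable c hc w α γ hαinj hw) volume

end
theorem stmt13 {Ω : Type*} [MeasurableSpace Ω] (ℙ : Measure Ω) [IsProbabilityMeasure ℙ]
    (ν : ℕ) (hν : 1 ≤ ν) (Nr : ℕ) (s : ℝ) (hs : 0 < s)
    (a : Fin Nr → EuclideanSpace ℝ (Fin ν)) (ha : Function.Injective a)
    (H : Ω → EuclideanSpace ℝ (Fin ν)) (hH : Measurable H)
    (p : EuclideanSpace ℝ (Fin ν) → ℝ) (hppos : ∀ η, 0 < p η)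
    (hlaw : Measure.map H ℙ = volume.withDensity (fun η => ENNReal.ofReal (p η)))
    (h : Fin Nr → EuclideanSpace ℝ (Fin ν) → ℝ)
    (hh : ∀ r η, h r η = Real.exp (-‖η - a r‖ ^ 2 / (ν * s ^ 2)))
    (w : Fin Nr → ℝ) (hw : w ≠ 0) :
    0 < ∑ r, ∑ r', w r * w r' * ∫ ω, h r (H ω) * h r' (H ω) ∂ℙ := by
  classical
  obtain ⟨n, rfl⟩ : ∃ n : ℕ, ν = n + 1 := ⟨ν - 1, (Nat.succ_pred_eq_of_pos hν).symm⟩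
  obtain ⟨r₀, hr₀⟩ : ∃ r, w r ≠ 0 := Function.ne_iff.mp hw
  have hc : 0 < ((n + 1 : ℕ) : ℝ) * s ^ 2 := by positivity
  have hhpos : ∀ (r : Fin Nr) η, 0 < h r η := fun r η => by
    rw [hh]; exact Real.exp_pos _
  have hhle : ∀ (r : Fin Nr) η, h r η ≤ 1 := by
    intro r η
    rw [hh]
    apply Real.exp_le_one_iff.mpr
    apply div_nonpos_of_nonpos_of_nonneg
    · simp [sq_nonneg]
    · exact le_of_lt hc
  have hcont : ∀ r : Fin Nr, Continuous (h r) := by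
    intro r
    have hre : h r = fun η => Real.exp (-‖η - a r‖ ^ 2 / (((n + 1 : ℕ) : ℝ) * s ^ 2)) :=
      funext (hh r)
    rw [hre]
    exact Real.continuous_exp.comp
      ((((continuous_id.sub continuous_const).norm.pow 2).neg).div_const _)
  set f : EuclideanSpace ℝ (Fin (n + 1)) → ℝ := fun η => ∑ r, w r * h r η with hfd
  have hcontf : Continuous f := continuous_finset_sum _ fun r _ => continuous_const.mul (hcont r)
  have hInt : ∀ r r' : Fin Nr, Integrable (fun ω => h r (H ω) * h r' (H ω)) ℙ := by
    intro r r'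
    refine Integrable.mono' (integrable_const (1 : ℝ))
      ((((hcont r).measurable.comp hH).mul ((hcont r').measurable.comp hH)).aestronglyMeasurable)
      (Filter.Eventually.of_forall fun ω => ?_)
    rw [Real.norm_eq_abs, abs_mul, abs_of_pos (hhpos r (H ω)), abs_of_pos (hhpos r' (H ω))]
    calc h r (H ω) * h r' (H ω) ≤ 1 * 1 :=
          mul_le_mul (hhle _ _) (hhle _ _) (le_of_lt (hhpos _ _)) zero_le_one
      _ = 1 := mul_one 1
  have hstep1 : ∑ r, ∑ r', w r * w r' * ∫ ω, h r (H ω) * h r' (H ω) ∂ℙ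
      = ∫ ω, (f (H ω)) ^ 2 ∂ℙ := by
    calc ∑ r, ∑ r', w r * w r' * ∫ ω, h r (H ω) * h r' (H ω) ∂ℙ
        = ∑ r, ∫ ω, ∑ r', w r * w r' * (h r (H ω) * h r' (H ω)) ∂ℙ := by
          refine Finset.sum_congr rfl fun r _ => ?_
          rw [integral_finset_sum _ fun r' _ => (hInt r r').const_mul _]
          exact Finset.sum_congr rfl fun r' _ => (integral_const_mul _ _).symm
      _ = ∫ ω, ∑ r, ∑ r', w r * w r' * (h r (H ω) * h r' (H ω)) ∂ℙ := by
          rw [integral_finset_sum _ fun r _ =>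
            integrable_finset_sum _ fun r' _ => (hInt r r').const_mul _]
      _ = ∫ ω, (f (H ω)) ^ 2 ∂ℙ := by
          apply integral_congr_ae
          apply Filter.Eventually.of_forall
          intro ω
          rw [hfd]
          simp only
          rw [sq, Finset.sum_mul_sum]
          exact Finset.sum_congr rfl fun r _ => Finset.sum_congr rfl fun r' _ => by ring
  rw [hstep1]
  set Z : Set (EuclideanSpace ℝ (Fin (n + 1))) := {η | f η = 0} with hZd
  have hZm : MeasurableSet Z := (isClosed_eq hcontf continuous_const).measurableSet
  have hvolZ : volume Z = 0 := by
    have hfeq : f = fun η => ∑ r, w r * Real.exp (-‖η - a r‖ ^ 2 / (((n + 1 : ℕ) : ℝ) * s ^ 2)) := by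
      funext η
      rw [hfd]
      exact Finset.sum_congr rfl fun r _ => by rw [hh]
    rw [hZd, hfeq]
    exact aux_volume_zero _ hc a ha w hr₀
  have hlawZ : Measure.map H ℙ Z = 0 := by
    rw [hlaw, withDensity_apply _ hZm]
    exact setLIntegral_measure_zero _ _ hvolZ
  haveI : IsProbabilityMeasure (Measure.map H ℙ) := Measure.isProbabilityMeasure_map hH.aemeasurable
  have hlawV : 0 < Measure.map H ℙ Zᶜ := by
    have h1 : (1 : ENNReal) ≤ Measure.map H ℙ Zᶜ := by
      calc (1 : ENNReal) = Measure.map H ℙ (Zᶜ ∪ Z) := by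
            rw [Set.compl_union_self]; exact measure_univ.symm
        _ ≤ Measure.map H ℙ Zᶜ + Measure.map H ℙ Z := measure_union_le _ _
        _ = Measure.map H ℙ Zᶜ := by rw [hlawZ, add_zero]
    exact zero_lt_one.trans_le h1
  have hmeasf2 : AEStronglyMeasurable (fun ω => (f (H ω)) ^ 2) ℙ :=
    ((hcontf.measurable.comp hH).pow_const 2).aestronglyMeasurable
  have hintf2 : Integrable (fun ω => (f (H ω)) ^ 2) ℙ := by
    refine Integrable.mono' (integrable_const ((∑ r, |w r|) ^ 2)) hmeasf2
      (Filter.Eventually.of_forall fun ω => ?_)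
    have hb : |f (H ω)| ≤ ∑ r, |w r| := by
      rw [hfd]
      calc |∑ r, w r * h r (H ω)| ≤ ∑ r, |w r * h r (H ω)| := Finset.abs_sum_le_sum_abs _ _
        _ ≤ ∑ r, |w r| := by
            apply Finset.sum_le_sum
            intro r _
            rw [abs_mul]
            calc |w r| * |h r (H ω)| ≤ |w r| * 1 := by
                  apply mul_le_mul_of_nonneg_left _ (abs_nonneg _)
                  rw [abs_of_pos (hhpos _ _)]
                  exact hhle _ _
              _ = |w r| := mul_one _
    rw [Real.norm_eq_abs, abs_of_nonneg (sq_nonneg _)]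
    calc (f (H ω)) ^ 2 = |f (H ω)| ^ 2 := (sq_abs _).symm
      _ ≤ (∑ r, |w r|) ^ 2 := pow_le_pow_left₀ (abs_nonneg _) hb 2
  rw [integral_pos_iff_support_of_nonneg_ae
    (Filter.Eventually.of_forall fun ω => sq_nonneg _) hintf2]
  have hsupp : Function.support (fun ω => (f (H ω)) ^ 2) = H ⁻¹' Zᶜ := by
    ext ω
    simp [Function.support, hZd, pow_eq_zero_iff]
  rw [hsupp, ← Measure.map_apply hH hZm.compl]
  exact hlawV
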